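/- Let n ≥ 1, let A = (a_{ij}) be a real n×n matrix satisfying the cyclic non-increasing condition, let λ ∈ ℝ, let C be a closed strongly connected component of the graph 𝒢(A), and suppose the vector x ∈ ℝⁿ satisfies Aᵀx = λe. Then there exists μ ∈ ℝ such that Σ_{i∈C} a_{ij} x_i = μ for every j ∈ C (that is, [A]ᵀ_{CC}[x]_C is a constant vector). -/

import Mathlib

open Matrix BigOperators

/-- The cyclic non-increasing condition: each row of `A` weakly decreases
cyclically starting from the diagonal, i.e. `a_{i[j-1]} ≥ a_{ij}` for all
`j ≠ i` (indices in `Fin n`, arithmetic mod `n`). -/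
def CyclicNonIncr {n : ℕ} [NeZero n] (A : Matrix (Fin n) (Fin n) ℝ) : Prop :=
  ∀ i j : Fin n, j ≠ i → A i (j - 1) ≥ A i j

/-- The directed graph `𝒢(A)` has an edge from `i` to `j` iff `a_{i[j-1]} > a_{ij}`. -/
def GraphEdge {n : ℕ} [NeZero n] (A : Matrix (Fin n) (Fin n) ℝ) (i j : Fin n) : Prop :=
  A i (j - 1) > A i j

/-- `i` and `j` are strongly connected in `𝒢(A)`: there are directed paths
(possibly of length 0) from `i` to `j` and from `j` to `i`. -/
def Conn {n : ℕ} [NeZero n] (A : Matrix (Fin n) (Fin n) ℝ) (i j : Fin n) : Prop :=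
  Relation.ReflTransGen (GraphEdge A) i j ∧ Relation.ReflTransGen (GraphEdge A) j i

/-- `C` is a strongly connected component of `𝒢(A)`: an equivalence class of
the strong-connectivity relation. -/
def IsSCC {n : ℕ} [NeZero n] (A : Matrix (Fin n) (Fin n) ℝ) (C : Set (Fin n)) : Prop :=
  ∃ i, C = {j | Conn A i j}

/-- `C` is a closed SCC of `𝒢(A)`: an SCC with no edge leaving it. -/
def IsClosedSCC {n : ℕ} [NeZero n] (A : Matrix (Fin n) (Fin n) ℝ) (C : Set (Fin n)) : Prop :=
  IsSCC A C ∧ ∀ i ∈ C, ∀ j, GraphEdge A i j → j ∈ C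

/-- `C` is an open SCC of `𝒢(A)`: an SCC with some edge leaving it. -/
def IsOpenSCC {n : ℕ} [NeZero n] (A : Matrix (Fin n) (Fin n) ℝ) (C : Set (Fin n)) : Prop :=
  IsSCC A C ∧ ¬ (∀ i ∈ C, ∀ j, GraphEdge A i j → j ∈ C)

def ClosedAt {n : ℕ} [NeZero n] (A : Matrix (Fin n) (Fin n) ℝ) (i : Fin n) : Prop :=
  ∀ u v, Conn A i u → GraphEdge A u v → Conn A i v

section basic
variable {n : ℕ} [NeZero n] {A : Matrix (Fin n) (Fin n) ℝ}

lemma conn_refl (i : Fin n) : Conn A i i := ⟨.refl, .refl⟩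

lemma conn_symm {i j : Fin n} (h : Conn A i j) : Conn A j i := ⟨h.2, h.1⟩

lemma conn_trans {i j k : Fin n} (h : Conn A i j) (h' : Conn A j k) : Conn A i k :=
  ⟨h.1.trans h'.1, h'.2.trans h.2⟩

lemma closedAt_of_conn {i j : Fin n} (h : ClosedAt A i) (hij : Conn A i j) :
    ClosedAt A j := fun u v hju he =>
  conn_trans (conn_symm hij) (h u v (conn_trans hij hju) he)

/-- a set closed under edges is closed under reachability -/
lemma closure_reach {P : Fin n → Prop} (hP : ∀ i, P i → ∀ j, GraphEdge A i j → P j)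
    {i j : Fin n} (h : Relation.ReflTransGen (GraphEdge A) i j) (hi : P i) : P j := by
  induction h with
  | refl => exact hi
  | tail _ he ih => exact hP _ ih _ he

open Classical in
lemma reach_closed (i : Fin n) :
    ∃ j, Relation.ReflTransGen (GraphEdge A) i j ∧ ClosedAt A j := by
  classical
  have key : ∀ m : ℕ, ∀ i : Fin n,
      (Finset.univ.filter (fun w => Relation.ReflTransGen (GraphEdge A) i w)).card ≤ m →
      ∃ j, Relation.ReflTransGen (GraphEdge A) i j ∧ ClosedAt A j := by
    intro m
    induction m with
    | zero =>
      intro i h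
      exfalso
      have : i ∈ Finset.univ.filter (fun w => Relation.ReflTransGen (GraphEdge A) i w) :=
        Finset.mem_filter.mpr ⟨Finset.mem_univ i, .refl⟩
      have := Finset.card_pos.mpr ⟨i, this⟩
      omega
    | succ m ih =>
      intro i h
      by_cases hc : ClosedAt A i
      · exact ⟨i, .refl, hc⟩
      · simp only [ClosedAt, not_forall] at hc
        obtain ⟨u, v, hiu, he, hnv⟩ := hc
        have hiv : Relation.ReflTransGen (GraphEdge A) i v := hiu.1.tail he
        have hnvi : ¬ Relation.ReflTransGen (GraphEdge A) v i := fun hh => hnv ⟨hiv, hh⟩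
        have hss : (Finset.univ.filter (fun w => Relation.ReflTransGen (GraphEdge A) v w)) ⊂
            (Finset.univ.filter (fun w => Relation.ReflTransGen (GraphEdge A) i w)) := by
          constructor
          · intro w hw
            simp only [Finset.mem_filter, Finset.mem_univ, true_and] at *
            exact hiv.trans hw
          · intro hsub
            have : i ∈ Finset.univ.filter (fun w => Relation.ReflTransGen (GraphEdge A) i w) :=
              Finset.mem_filter.mpr ⟨Finset.mem_univ i, .refl⟩
            have := hsub this
            simp only [Finset.mem_filter, Finset.mem_univ, true_and] at this
            exact hnvi this
        have hcard := Finset.card_lt_card hss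
        obtain ⟨j, hvj, hcj⟩ := ih v (by omega)
        exact ⟨j, hiv.trans hvj, hcj⟩
  exact key _ i le_rfl

end basic

section dd
variable {n : ℕ} [NeZero n] (A : Matrix (Fin n) (Fin n) ℝ)

/-- the drop at column `j` in row `i` -/
def dd (i j : Fin n) : ℝ := A i (j - 1) - A i j

variable {A}

lemma dd_nonneg (hA : CyclicNonIncr A) {i j : Fin n} (h : j ≠ i) : 0 ≤ dd A i j :=
  sub_nonneg.mpr (hA i j h)

lemma dd_pos_iff_edge {i j : Fin n} : 0 < dd A i j ↔ GraphEdge A i j := sub_pos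

lemma dd_eq_zero (hA : CyclicNonIncr A) {i j : Fin n} (h : j ≠ i)
    (hne : ¬ GraphEdge A i j) : dd A i j = 0 :=
  le_antisymm (by simpa [dd_pos_iff_edge] using (not_lt.mp (fun hh => hne (dd_pos_iff_edge.mp hh))))
    (dd_nonneg hA h)

lemma sum_dd (i : Fin n) : ∑ j, dd A i j = 0 := by
  unfold dd
  rw [Finset.sum_sub_distrib, sub_eq_zero]
  have := Equiv.sum_comp (Equiv.subRight (1 : Fin n)) (fun j => A i j)
  simpa [Equiv.subRight_apply] using this

/-- total outflow rate -/
def del (A : Matrix (Fin n) (Fin n) ℝ) (i : Fin n) : ℝ :=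
  ∑ j ∈ Finset.univ.erase i, dd A i j

lemma del_nonneg (hA : CyclicNonIncr A) (i : Fin n) : 0 ≤ del A i :=
  Finset.sum_nonneg fun j hj => dd_nonneg hA (Finset.ne_of_mem_erase hj)

lemma dd_self (i : Fin n) : dd A i i = - del A i := by
  have h := sum_dd (A := A) i
  rw [← Finset.add_sum_erase _ _ (Finset.mem_univ i)] at h
  unfold del
  linarith

end dd

section transient
variable {n : ℕ} [NeZero n] {A : Matrix (Fin n) (Fin n) ℝ}

lemma transient_zero (hA : CyclicNonIncr A) {x : Fin n → ℝ}
    (hcol : ∀ j : Fin n, ∑ i, dd A i j * x i = 0) :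
    ∀ i, ¬ ClosedAt A i → x i = 0 := by
  classical
  set M : Finset (Fin n) := Finset.univ.filter (fun i => ¬ ClosedAt A i) with hM
  have hmemM : ∀ i, i ∈ M ↔ ¬ ClosedAt A i := by
    intro i; simp [hM]
  -- key equation for each column j ∈ M
  have hMkey : ∀ j ∈ M, del A j * x j = ∑ i ∈ M.erase j, dd A i j * x i := by
    intro j hj
    have h0 : ∑ i ∈ M, dd A i j * x i = 0 := by
      have hsplit := Finset.sum_filter_add_sum_filter_not Finset.univ
        (fun i => ¬ ClosedAt A i) (fun i => dd A i j * x i)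
      have hz : ∑ i ∈ Finset.univ.filter (fun i => ¬¬ ClosedAt A i), dd A i j * x i = 0 := by
        apply Finset.sum_eq_zero
        intro i hi
        have hci : ClosedAt A i := not_not.mp (Finset.mem_filter.mp hi).2
        have hji : j ≠ i := by
          rintro rfl; exact (hmemM j).mp hj hci
        have hnedge : ¬ GraphEdge A i j := by
          intro he
          have hconn : Conn A i j := hci i j (conn_refl i) he
          exact (hmemM j).mp hj (closedAt_of_conn hci hconn)
        rw [dd_eq_zero hA hji hnedge, zero_mul]
      have := hcol j
      rw [← hsplit, hz, add_zero] at this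
      exact this
    have hsplit2 : dd A j j * x j + ∑ i ∈ M.erase j, dd A i j * x i
        = ∑ i ∈ M, dd A i j * x i :=
      Finset.add_sum_erase M (fun i => dd A i j * x i) hj
    have hdjj : dd A j j = - del A j := dd_self j
    rw [hdjj, h0] at hsplit2
    linarith
  -- the big inequality chain
  set F : Fin n → ℝ := fun j => ∑ i ∈ M.erase j, dd A i j * |x i| with hF
  set P : ℝ := ∑ j ∈ M, del A j * |x j| with hP
  have hPQ : ∀ j ∈ M, del A j * |x j| ≤ F j := by
    intro j hj
    have h1 : del A j * |x j| = |del A j * x j| := by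
      rw [abs_mul, abs_of_nonneg (del_nonneg hA j)]
    rw [h1, hMkey j hj]
    calc |∑ i ∈ M.erase j, dd A i j * x i| ≤ ∑ i ∈ M.erase j, |dd A i j * x i| :=
          Finset.abs_sum_le_sum_abs _ _
      _ = F j := by
          apply Finset.sum_congr rfl
          intro i hi
          have hij : j ≠ i := (Finset.ne_of_mem_erase hi).symm
          rw [abs_mul, abs_of_nonneg (dd_nonneg hA hij)]
  have hswap : ∑ j ∈ M, F j = ∑ i ∈ M, (∑ j ∈ M.erase i, dd A i j) * |x i| := by
    have hgF : ∀ j ∈ M, F j = ∑ i ∈ M, (if i = j then 0 else dd A i j * |x i|) := by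
      intro j hjM
      have h1 : (if j = j then (0:ℝ) else dd A j j * |x j|) + ∑ i ∈ M.erase j,
          (if i = j then (0:ℝ) else dd A i j * |x i|) = ∑ i ∈ M,
          (if i = j then (0:ℝ) else dd A i j * |x i|) :=
        Finset.add_sum_erase M (fun i => if i = j then (0:ℝ) else dd A i j * |x i|) hjM
      rw [if_pos rfl, zero_add] at h1
      rw [← h1]
      apply Finset.sum_congr rfl
      intro i hi
      rw [if_neg (Finset.ne_of_mem_erase hi)]
    calc ∑ j ∈ M, F j = ∑ j ∈ M, ∑ i ∈ M, (if i = j then 0 else dd A i j * |x i|) :=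
          Finset.sum_congr rfl hgF
      _ = ∑ i ∈ M, ∑ j ∈ M, (if i = j then 0 else dd A i j * |x i|) := Finset.sum_comm
      _ = ∑ i ∈ M, (∑ j ∈ M.erase i, dd A i j) * |x i| := by
          apply Finset.sum_congr rfl
          intro i hiM
          rw [Finset.sum_mul]
          have h1 : (if i = i then (0:ℝ) else dd A i i * |x i|) + ∑ j ∈ M.erase i,
              (if i = j then (0:ℝ) else dd A i j * |x i|) = ∑ j ∈ M,
              (if i = j then (0:ℝ) else dd A i j * |x i|) :=
            Finset.add_sum_erase M (fun j => if i = j then (0:ℝ) else dd A i j * |x i|) hiM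
          rw [if_pos rfl, zero_add] at h1
          rw [← h1]
          apply Finset.sum_congr rfl
          intro j hj
          rw [if_neg (Ne.symm (Finset.ne_of_mem_erase hj))]
  have hsubset : ∀ i : Fin n, M.erase i ⊆ Finset.univ.erase i :=
    fun i => Finset.erase_subset_erase i (Finset.subset_univ M)
  have hQR : ∀ i ∈ M, (∑ j ∈ M.erase i, dd A i j) * |x i| ≤ del A i * |x i| := by
    intro i _
    apply mul_le_mul_of_nonneg_right _ (abs_nonneg _)
    exact Finset.sum_le_sum_of_subset_of_nonneg (hsubset i)
      (fun j hj _ => dd_nonneg hA (Finset.ne_of_mem_erase hj))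
  have hchain1 : P ≤ ∑ j ∈ M, F j := Finset.sum_le_sum hPQ
  have hchain2 : ∑ j ∈ M, F j ≤ P := by
    rw [hswap, hP]
    exact Finset.sum_le_sum hQR
  have hQeqP : ∑ j ∈ M, F j = P := le_antisymm hchain2 hchain1
  have hEq1 : ∀ j ∈ M, del A j * |x j| = F j :=
    (Finset.sum_eq_sum_iff_of_le hPQ).mp hQeqP.symm
  have hEq2 : ∀ i ∈ M, (∑ j ∈ M.erase i, dd A i j) * |x i| = del A i * |x i| :=
    (Finset.sum_eq_sum_iff_of_le hQR).mp (by rw [← hswap, hQeqP, hP])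
  -- consequence 1 : no edges from support of x∩M leaving M
  have hOut : ∀ i ∈ M, x i ≠ 0 → ∀ j, j ∉ M → dd A i j = 0 := by
    intro i hi hxi j hj
    have habs : |x i| ≠ 0 := abs_ne_zero.mpr hxi
    have hsums : ∑ j ∈ M.erase i, dd A i j = del A i :=
      mul_right_cancel₀ habs (hEq2 i hi)
    have hzero : ∑ j' ∈ (Finset.univ.erase i) \ (M.erase i), dd A i j' = 0 := by
      have := Finset.sum_sdiff (f := fun j' => dd A i j') (hsubset i)
      rw [hsums] at this
      unfold del at this
      linarith
    have hmem : j ∈ (Finset.univ.erase i) \ (M.erase i) := by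
      have hji : j ≠ i := by rintro rfl; exact hj hi
      simp [Finset.mem_sdiff, hji, hj]
    exact (Finset.sum_eq_zero_iff_of_nonneg
      (fun j' hj' => dd_nonneg hA (Finset.ne_of_mem_erase (Finset.mem_sdiff.mp hj').1))).mp
      hzero j hmem
  -- consequence 2 : support is closed under edges within M
  have hClosure : ∀ i, (i ∈ M ∧ x i ≠ 0) → ∀ j, GraphEdge A i j → (j ∈ M ∧ x j ≠ 0) := by
    rintro i ⟨hiM, hxi⟩ j he
    have hddp : 0 < dd A i j := dd_pos_iff_edge.mpr he
    have hjM : j ∈ M := by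
      by_contra hjn
      rw [hOut i hiM hxi j hjn] at hddp
      exact lt_irrefl 0 hddp
    refine ⟨hjM, ?_⟩
    intro hxj0
    have hFj : F j = 0 := by
      have := hEq1 j hjM
      rw [hxj0, abs_zero, mul_zero] at this
      exact this.symm
    have hiMe : i ∈ M.erase j := by
      refine Finset.mem_erase.mpr ⟨?_, hiM⟩
      rintro rfl; exact hxi hxj0
    have := (Finset.sum_eq_zero_iff_of_nonneg
      (fun i' hi' => mul_nonneg (dd_nonneg hA (Ne.symm (Finset.ne_of_mem_erase hi')))
        (abs_nonneg _))).mp hFj i hiMe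
    have habs : |x i| ≠ 0 := abs_ne_zero.mpr hxi
    have : dd A i j = 0 := by
      rcases mul_eq_zero.mp this with h | h
      · exact h
      · exact absurd h habs
    linarith
  -- conclude
  intro i0 hno
  by_contra hx0
  have hi0 : i0 ∈ M ∧ x i0 ≠ 0 := ⟨(hmemM i0).mpr hno, hx0⟩
  obtain ⟨j, hreach, hcj⟩ := reach_closed i0
  have hjS := closure_reach hClosure hreach hi0
  exact (hmemM j).mp hjS.1 hcj

end transient

theorem stmt_2 (n : ℕ) [NeZero n] (hn : 1 ≤ n) (A : Matrix (Fin n) (Fin n) ℝ)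
    (hA : CyclicNonIncr A) (lam : ℝ)
    (C : Finset (Fin n)) (hC : IsClosedSCC A (↑C : Set (Fin n)))
    (x : Fin n → ℝ) (hx : Aᵀ.mulVec x = fun _ => lam) :
    ∃ μ : ℝ, ∀ j ∈ C, ∑ i ∈ C, A i j * x i = μ := by
  classical
  obtain ⟨⟨i0, hEq⟩, hcl⟩ := hC
  have hmemC : ∀ j, j ∈ C ↔ Conn A i0 j := by
    intro j
    constructor
    · intro hj
      have h1 : (j : Fin n) ∈ (↑C : Set (Fin n)) := hj
      rw [hEq] at h1; exact h1
    · intro hj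
      have h1 : j ∈ (↑C : Set (Fin n)) := by rw [hEq]; exact hj
      exact h1
  have hcol : ∀ j : Fin n, ∑ i, A i j * x i = lam := by
    intro j
    have h := congrFun hx j
    simpa [Matrix.mulVec, dotProduct, Matrix.transpose_apply] using h
  have hcol0 : ∀ j : Fin n, ∑ i, dd A i j * x i = 0 := by
    intro j
    have h1 := hcol (j - 1)
    have h2 := hcol j
    unfold dd
    simp only [sub_mul, Finset.sum_sub_distrib]
    rw [h1, h2, sub_self]
  have hxz := transient_zero hA hcol0
  set S : Fin n → ℝ := fun j => ∑ i ∈ C, A i j * x i with hS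
  have hstep : ∀ j : Fin n, S (j - 1) = S j := by
    intro j
    have hzero : ∑ i ∈ C, dd A i j * x i = 0 := by
      by_cases hjC : j ∈ C
      · have hfull := hcol0 j
        have hsplit : ∑ i ∈ C, dd A i j * x i + ∑ i ∈ Cᶜ, dd A i j * x i
            = ∑ i, dd A i j * x i := Finset.sum_add_sum_compl C _
        have hz : ∑ i ∈ Cᶜ, dd A i j * x i = 0 := by
          apply Finset.sum_eq_zero
          intro i hi
          have hiC : i ∉ C := Finset.mem_compl.mp hi
          by_cases hxi : x i = 0
          · rw [hxi, mul_zero]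
          · have hci : ClosedAt A i := by
              by_contra hnc; exact hxi (hxz i hnc)
            have hji : j ≠ i := by rintro rfl; exact hiC hjC
            have hnedge : ¬ GraphEdge A i j := by
              intro he
              have hconn : Conn A i j := hci i j (conn_refl i) he
              have : Conn A i0 i := conn_trans ((hmemC j).mp hjC) (conn_symm hconn)
              exact hiC ((hmemC i).mpr this)
            rw [dd_eq_zero hA hji hnedge, zero_mul]
        rw [hfull, hz, add_zero] at hsplit
        exact hsplit
      · apply Finset.sum_eq_zero
        intro i hiC
        have hji : j ≠ i := by rintro rfl; exact hjC hiC
        have hnedge : ¬ GraphEdge A i j := fun he =>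
          hjC (hcl i (Finset.mem_coe.mpr hiC) j he)
        rw [dd_eq_zero hA hji hnedge, zero_mul]
    have hd : S (j - 1) - S j = ∑ i ∈ C, dd A i j * x i := by
      simp [hS, dd, sub_mul, Finset.sum_sub_distrib]
    linarith
  open Fin.NatCast in
  have hsteps : ∀ (k : ℕ) (j : Fin n), S (j - (k : Fin n)) = S j := by
    intro k
    induction k with
    | zero => intro j; simp
    | succ k ih =>
      intro j
      have h1 : ((k + 1 : ℕ) : Fin n) = (k : Fin n) + 1 := by push_cast; ring
      rw [h1, ← sub_sub, hstep (j - (k : Fin n))]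
      exact ih j
  refine ⟨S 0, ?_⟩
  intro j hj
  have h := hsteps j.val j
  open Fin.NatCast in
  rw [Fin.cast_val_eq_self, sub_self] at h
  exact h.symm
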